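/- For ℓ ≥ 2, a real number q with |q| < 1, and any z, the identity z(1-q) Σ_{k=0}^{∞} q^k (q^{k+1} z; q)_{ℓ-1} = (1-q)(1 - (z;q)_ℓ)/(1 - q^ℓ) holds. -/

import Mathlib

/-- The q-Pochhammer symbol (z;q)_r = ∏_{j=0}^{r-1} (1 - q^j z). -/
def qPoch (z q : ℝ) (r : ℕ) : ℝ := ∏ j ∈ Finset.range r, (1 - q ^ j * z)

lemma qPoch_succ' (w q : ℝ) (m : ℕ) :
    qPoch w q (m + 1) = qPoch (q * w) q m * (1 - w) := by
  unfold qPoch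
  rw [Finset.prod_range_succ']
  congr 1
  · exact Finset.prod_congr rfl fun j _ => by ring_nf
  · simp

lemma qPoch_succ (w q : ℝ) (m : ℕ) :
    qPoch w q (m + 1) = qPoch w q m * (1 - q ^ m * w) :=
  Finset.prod_range_succ _ _

lemma qPoch_bound (q z : ℝ) (hq : |q| < 1) (m k : ℕ) :
    |qPoch (q ^ k * z) q m| ≤ (1 + |z|) ^ m := by
  unfold qPoch
  rw [Finset.abs_prod]
  calc ∏ j ∈ Finset.range m, |1 - q ^ j * (q ^ k * z)|
      ≤ ∏ _j ∈ Finset.range m, (1 + |z|) := by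
        apply Finset.prod_le_prod (fun _ _ => abs_nonneg _)
        intro j _
        have h1 : |q ^ j * (q ^ k * z)| ≤ |z| := by
          rw [abs_mul, abs_mul, abs_pow, abs_pow]
          have hj : |q| ^ j ≤ 1 := pow_le_one₀ (abs_nonneg q) hq.le
          have hk : |q| ^ k ≤ 1 := pow_le_one₀ (abs_nonneg q) hq.le
          calc |q| ^ j * (|q| ^ k * |z|) ≤ 1 * (1 * |z|) := by
                gcongr
            _ = |z| := by ring
        calc |1 - q ^ j * (q ^ k * z)| ≤ |(1:ℝ)| + |q ^ j * (q ^ k * z)| :=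
              abs_sub _ _
          _ ≤ 1 + |z| := by rw [abs_one]; linarith
    _ = (1 + |z|) ^ m := by rw [Finset.prod_const, Finset.card_range]

/-- the q-integral analogue of the power rule. -/
theorem stmt_4 (ℓ : ℕ) (hℓ : 2 ≤ ℓ) (q : ℝ) (hq : |q| < 1) (z : ℝ) :
    z * (1 - q) * ∑' k : ℕ, q ^ k * qPoch (q ^ (k + 1) * z) q (ℓ - 1) =
      (1 - q) * (1 - qPoch z q ℓ) / (1 - q ^ ℓ) := by
  obtain ⟨m, rfl⟩ : ∃ m, ℓ = m + 1 := ⟨ℓ - 1, by omega⟩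
  simp only [Nat.add_sub_cancel]
  -- summability
  have hgeo : Summable fun k : ℕ => (1 + |z|) ^ m * |q| ^ k :=
    (summable_geometric_of_lt_one (abs_nonneg q) hq).mul_left _
  have hsum : Summable (fun k : ℕ => q ^ k * qPoch (q ^ (k + 1) * z) q m) := by
    apply Summable.of_norm_bounded hgeo
    intro k
    rw [Real.norm_eq_abs, abs_mul, abs_pow, mul_comm]
    exact mul_le_mul_of_nonneg_right (qPoch_bound q z hq m (k + 1))
      (pow_nonneg (abs_nonneg q) k)
  set S := ∑' k : ℕ, q ^ k * qPoch (q ^ (k + 1) * z) q m with hS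
  -- telescoping identity
  have key : ∀ k : ℕ, qPoch (q ^ (k + 1) * z) q (m + 1) - qPoch (q ^ k * z) q (m + 1)
      = z * (1 - q ^ (m + 1)) * (q ^ k * qPoch (q ^ (k + 1) * z) q m) := by
    intro k
    rw [qPoch_succ (q ^ (k+1) * z) q m, qPoch_succ' (q ^ k * z) q m]
    have h : q * (q ^ k * z) = q ^ (k + 1) * z := by ring
    rw [h]
    ring
  -- limit of qPoch (q^n z)
  have h0 : Filter.Tendsto (fun n : ℕ => q ^ n * z) Filter.atTop (nhds 0) := by
    simpa using (tendsto_pow_atTop_nhds_zero_of_abs_lt_one hq).mul_const z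
  have hcont : Continuous fun w : ℝ => qPoch w q (m + 1) := by
    unfold qPoch
    exact continuous_finset_prod _ fun j _ => by continuity
  have hg : Filter.Tendsto (fun n : ℕ => qPoch (q ^ n * z) q (m + 1))
      Filter.atTop (nhds 1) := by
    have := (hcont.tendsto 0).comp h0
    simpa [qPoch, Function.comp_def] using this
  -- partial sums of the telescoping series
  have hps : Filter.Tendsto
      (fun n => ∑ k ∈ Finset.range n,
        (qPoch (q ^ (k + 1) * z) q (m + 1) - qPoch (q ^ k * z) q (m + 1)))
      Filter.atTop (nhds (1 - qPoch z q (m + 1))) := by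
    have : ∀ n, ∑ k ∈ Finset.range n,
        (qPoch (q ^ (k + 1) * z) q (m + 1) - qPoch (q ^ k * z) q (m + 1))
        = qPoch (q ^ n * z) q (m + 1) - qPoch z q (m + 1) := by
      intro n
      rw [Finset.sum_range_sub (fun k => qPoch (q ^ k * z) q (m + 1))]
      simp
    simp only [this]
    exact hg.sub_const _
  have hhs : HasSum (fun k : ℕ => z * (1 - q ^ (m + 1)) *
      (q ^ k * qPoch (q ^ (k + 1) * z) q m)) (z * (1 - q ^ (m + 1)) * S) :=
    hsum.hasSum.mul_left _
  have h1 := hhs.tendsto_sum_nat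
  simp only [← key] at h1
  have hEq : z * (1 - q ^ (m + 1)) * S = 1 - qPoch z q (m + 1) :=
    tendsto_nhds_unique h1 hps
  have hne : (1:ℝ) - q ^ (m + 1) ≠ 0 := by
    have habs : |q ^ (m + 1)| < 1 := by
      rw [abs_pow]; exact pow_lt_one₀ (abs_nonneg q) hq (by omega)
    intro h
    have : q ^ (m + 1) = 1 := by linarith
    rw [this] at habs; norm_num at habs
  rw [← hEq]
  field_simp
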